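/- Let p be a prime power and n any integer. Then q_{ε̃}(κ_{n,2}) ≤ p for ε̃ = 1/(p+1): there exists an encoding C:F²→F^n over a field F of size p and decoding D such that the probability over a uniformly random message m ∈ F² and uniformly random edge e of the complete graph K_n that D(C_e(m)) = m is at least 1 − 1/(p+1). -/

import Mathlib

open Finset

section aux
variable {p : ℕ} {F : Type} [Field F] [Fintype F] [DecidableEq F] (e : F ≃ Fin p)

noncomputable def alph (r : ℕ) : F := if h : r < p then e.symm ⟨r, h⟩ else 0

lemma alph_inj {r s : ℕ} (hr : r < p) (hs : s < p) (h : r ≠ s) : alph e r ≠ alph e s := by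
  unfold alph
  rw [dif_pos hr, dif_pos hs]
  intro hcon
  exact h (congrArg Fin.val (e.symm.injective hcon))

noncomputable def encV (g : ℕ) (m : Fin 2 → Fin p) : Fin p :=
  if g = p then m 1 else e (e.symm (m 0) + alph e g * e.symm (m 1))

noncomputable def dec2 (ga gb : ℕ) (va vb : Fin p) : Fin 2 → Fin p :=
  if ga = p then
    fun t => if t = 0 then e (e.symm vb - alph e gb * e.symm va) else va
  else if gb = p then
    fun t => if t = 0 then e (e.symm va - alph e ga * e.symm vb) else vb
  else
    fun t => if t = 0 then
        e (e.symm va - alph e ga * ((e.symm va - e.symm vb) / (alph e ga - alph e gb)))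
      else e ((e.symm va - e.symm vb) / (alph e ga - alph e gb))

lemma dec2_correct (m : Fin 2 → Fin p) {ga gb : ℕ} (hga : ga < p + 1) (hgb : gb < p + 1)
    (hne : ga ≠ gb) : dec2 e ga gb (encV e ga m) (encV e gb m) = m := by
  funext t
  unfold dec2 encV
  by_cases h1 : ga = p
  · have h2 : gb ≠ p := fun h => hne (h1.trans h.symm)
    rw [if_pos h1, if_pos h1, if_neg h2]
    fin_cases t <;> simp [add_sub_cancel_right]
  · rw [if_neg h1]
    have hga' : ga < p := lt_of_le_of_ne (Nat.lt_succ_iff.mp hga) h1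
    by_cases h2 : gb = p
    · rw [if_pos h2, if_pos h2, if_neg h1]
      fin_cases t <;> simp [add_sub_cancel_right]
    · have hgb' : gb < p := lt_of_le_of_ne (Nat.lt_succ_iff.mp hgb) h2
      have hd : alph e ga - alph e gb ≠ 0 :=
        sub_ne_zero.mpr (alph_inj e hga' hgb' hne)
      rw [if_neg h2, if_neg h1, if_neg h2]
      have key : (e.symm (m 0) + alph e ga * e.symm (m 1)) -
          (e.symm (m 0) + alph e gb * e.symm (m 1)) =
          (alph e ga - alph e gb) * e.symm (m 1) := by ring
      fin_cases t <;>
        simp [key, mul_div_cancel_left₀ _ hd, add_sub_cancel_right]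
noncomputable def encC (n : ℕ) (m : Fin 2 → Fin p) (i : Fin n) : Fin p :=
  encV e (i.val % (p + 1)) m

noncomputable def decD (n : ℕ) (hp : 0 < p) (w : Fin n → Option (Fin p)) : Fin 2 → Fin p :=
  if h : (Finset.univ.filter (fun i => (w i).isSome)).Nonempty then
    dec2 e ((Finset.min' _ h).val % (p + 1)) ((Finset.max' _ h).val % (p + 1))
      ((w (Finset.min' _ h)).getD ⟨0, hp⟩) ((w (Finset.max' _ h)).getD ⟨0, hp⟩)
  else fun _ => ⟨0, hp⟩

lemma decD_correct_lt (hp : 0 < p) {n : ℕ} (m : Fin 2 → Fin p) (i j : Fin n)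
    (hlt : i < j) (hij : i.val % (p + 1) ≠ j.val % (p + 1)) :
    decD e n hp (fun t => if t = i ∨ t = j then some (encC e n m t) else none) = m := by
  set w : Fin n → Option (Fin p) :=
    fun t => if t = i ∨ t = j then some (encC e n m t) else none with hw
  have hwi : w i = some (encC e n m i) := by simp [hw]
  have hwj : w j = some (encC e n m j) := by simp [hw]
  set s : Finset (Fin n) := Finset.univ.filter (fun t => (w t).isSome) with hsdef
  have hs : s = {i, j} := by
    ext t
    by_cases h : t = i ∨ t = j <;>
      simp [hsdef, hw, h, Finset.mem_insert, Finset.mem_singleton]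
  have hmemi : i ∈ s := by rw [hs]; exact Finset.mem_insert_self _ _
  have hmemj : j ∈ s := by rw [hs]; simp
  have hne : s.Nonempty := ⟨i, hmemi⟩
  have hmin : Finset.min' s hne = i := by
    have h1 : s.min' hne ∈ ({i, j} : Finset (Fin n)) := hs ▸ Finset.min'_mem s hne
    have h2 := Finset.min'_le s i hmemi
    rcases Finset.mem_insert.mp h1 with h | h
    · exact h
    · rw [Finset.mem_singleton] at h
      exact absurd (h ▸ h2) (not_le.mpr hlt)
  have hmax : Finset.max' s hne = j := by
    have h1 : s.max' hne ∈ ({i, j} : Finset (Fin n)) := hs ▸ Finset.max'_mem s hne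
    have h2 := Finset.le_max' s j hmemj
    rcases Finset.mem_insert.mp h1 with h | h
    · exact absurd (h ▸ h2) (not_le.mpr hlt)
    · exact Finset.mem_singleton.mp h
  rw [decD, dif_pos hne, hmin, hmax, hwi, hwj]
  simp only [Option.getD_some]
  exact dec2_correct e m (Nat.mod_lt _ (Nat.succ_pos p)) (Nat.mod_lt _ (Nat.succ_pos p)) hij

lemma decD_correct (hp : 0 < p) {n : ℕ} (m : Fin 2 → Fin p) (i j : Fin n)
    (hij : i.val % (p + 1) ≠ j.val % (p + 1)) :
    decD e n hp (fun t => if t = i ∨ t = j then some (encC e n m t) else none) = m := by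
  have hne : i ≠ j := fun h => hij (by rw [h])
  rcases lt_or_gt_of_ne hne with h | h
  · exact decD_correct_lt e hp m i j h hij
  · have heq : (fun t => if t = i ∨ t = j then some (encC e n m t) else none) =
        (fun t : Fin n => if t = j ∨ t = i then some (encC e n m t) else none) :=
      funext fun t => by simp only [or_comm]
    rw [heq]
    exact decD_correct_lt e hp m j i h (Ne.symm hij)


end aux

lemma count_bound (p n : ℕ) :
    p * (n * (n - 1)) ≤
      (p + 1) * (Finset.univ.filter
        (fun y : Fin n × Fin n => y.1.val % (p + 1) ≠ y.2.val % (p + 1))).card := by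
  set A := (Finset.univ.filter
    (fun y : Fin n × Fin n => y.1.val % (p + 1) ≠ y.2.val % (p + 1))).card with hA
  set E := (Finset.univ.filter
    (fun y : Fin n × Fin n => y.1.val % (p + 1) = y.2.val % (p + 1))).card with hEdef
  have hAE : E + A = n * n := by
    rw [hA, hEdef, Finset.card_filter_add_card_filter_not]
    simp
  have hc : ∀ y : Fin n × Fin n, y.2.val / (p + 1) < (n + p) / (p + 1) := by
    intro y
    have hn1 : y.2.val ≤ n - 1 := Nat.le_pred_of_lt y.2.isLt
    calc y.2.val / (p + 1) ≤ (n - 1) / (p + 1) := Nat.div_le_div_right hn1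
      _ < (n - 1) / (p + 1) + 1 := Nat.lt_succ_self _
      _ = ((n - 1) + (p + 1)) / (p + 1) := (Nat.add_div_right _ (Nat.succ_pos p)).symm
      _ = (n + p) / (p + 1) := by
          congr 1
          have : 1 ≤ n := y.2.pos
          omega
  have hE : E ≤ n * ((n + p) / (p + 1)) := by
    rw [hEdef]
    have := Finset.card_le_card_of_injOn
      (f := fun y : Fin n × Fin n => (y.1, y.2.val / (p + 1)))
      (s := Finset.univ.filter
        (fun y : Fin n × Fin n => y.1.val % (p + 1) = y.2.val % (p + 1)))
      (t := (Finset.univ : Finset (Fin n)) ×ˢ Finset.range ((n + p) / (p + 1)))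
      (fun y _ => by
        simp only [Finset.mem_coe, Finset.mem_product, Finset.mem_univ, Finset.mem_range, true_and]
        exact hc y)
      (by
        intro y hy z hz hyz
        simp only [Finset.coe_filter, Finset.mem_univ, true_and, Set.mem_setOf_eq] at hy hz
        have hyz' : (y.1, y.2.val / (p + 1)) = (z.1, z.2.val / (p + 1)) := hyz
        have h1 : y.1 = z.1 := (Prod.ext_iff.mp hyz').1
        have h2 : y.2.val / (p + 1) = z.2.val / (p + 1) := (Prod.ext_iff.mp hyz').2
        have hmod : y.2.val % (p + 1) = z.2.val % (p + 1) := by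
          rw [← hy, ← hz, h1]
        clear hyz
        have : y.2.val = z.2.val := by
          rw [← Nat.div_add_mod y.2.val (p + 1), ← Nat.div_add_mod z.2.val (p + 1), h2, hmod]
        exact Prod.ext h1 (Fin.ext this))
    simpa using this
  have hE2 : (p + 1) * E ≤ n * (n + p) :=
    calc (p + 1) * E ≤ (p + 1) * (n * ((n + p) / (p + 1))) :=
          Nat.mul_le_mul_left _ hE
      _ = n * (((n + p) / (p + 1)) * (p + 1)) := by ring
      _ ≤ n * (n + p) := Nat.mul_le_mul_left _ (Nat.div_mul_le_self _ _)
  have hid : p * (n * (n - 1)) + n * (n + p) = (p + 1) * (n * n) := by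
    rcases n with _ | nn
    · simp
    · have : nn + 1 - 1 = nn := rfl
      rw [this]; ring
  have : p * (n * (n - 1)) + (p + 1) * E ≤ (p + 1) * A + (p + 1) * E := by
    calc p * (n * (n - 1)) + (p + 1) * E ≤ p * (n * (n - 1)) + n * (n + p) :=
          Nat.add_le_add_left hE2 _
      _ = (p + 1) * (n * n) := hid
      _ = (p + 1) * (E + A) := by rw [hAE]
      _ = (p + 1) * A + (p + 1) * E := by ring
  exact Nat.le_of_add_le_add_right this

lemma count_bound' (p n : ℕ) :
    p * (n * (n - 1)) ≤
      (p + 1) * Nat.card {y : Fin n × Fin n // y.1.val % (p + 1) ≠ y.2.val % (p + 1)} := by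
  have h := count_bound p n
  rwa [Nat.card_eq_fintype_card, Fintype.card_subtype]


/-- For a prime power p and any n, q_ε̃(κ_{n,2}) ≤ p for ε̃ = 1/(p+1): there
exist an encoding C : F² → F^n over an alphabet F of size p and a decoding D such that, over a
uniformly random message m ∈ F² and a uniformly random (ordered) edge of the complete graph
K_n, decoding succeeds with probability at least 1 - 1/(p+1) = p/(p+1).  The probability
bound is stated by counting: (p+1)·#{successes} ≥ p·(p²·n(n-1)). -/
theorem stmt18 (p n : ℕ) (hp : IsPrimePow p) :
    ∃ (C : (Fin 2 → Fin p) → Fin n → Fin p)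
      (D : (Fin n → Option (Fin p)) → Fin 2 → Fin p),
      p * (p ^ 2 * (n * (n - 1))) ≤
        (p + 1) * Nat.card {x : (Fin 2 → Fin p) × Fin n × Fin n //
          x.2.1 ≠ x.2.2 ∧
          D (fun i => if i = x.2.1 ∨ i = x.2.2 then some (C x.1 i) else none) = x.1} := by
  classical
  obtain ⟨q, s, hq, hs, hqs⟩ := hp
  have hq' : Nat.Prime q := Nat.prime_iff.mpr hq
  haveI : Fact (Nat.Prime q) := ⟨hq'⟩
  haveI : Fintype (GaloisField q s) := Fintype.ofFinite _
  have hcard : Fintype.card (GaloisField q s) = p := by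
    rw [← Nat.card_eq_fintype_card, GaloisField.card q s hs.ne', hqs]
  obtain ⟨e⟩ : Nonempty (GaloisField q s ≃ Fin p) := ⟨Fintype.equivFinOfCardEq hcard⟩
  have hp0 : 0 < p := hqs ▸ pow_pos hq'.pos s
  refine ⟨encC e n, decD e n hp0, ?_⟩
  set T := {y : Fin n × Fin n // y.1.val % (p + 1) ≠ y.2.val % (p + 1)} with hT
  set G := {x : (Fin 2 → Fin p) × Fin n × Fin n //
      x.2.1 ≠ x.2.2 ∧
      decD e n hp0 (fun i => if i = x.2.1 ∨ i = x.2.2 then some (encC e n x.1 i) else none)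
        = x.1} with hG
  have hφ : ∃ φ : (Fin 2 → Fin p) × T → G, Function.Injective φ := by
    refine ⟨fun z => ⟨(z.1, z.2.1.1, z.2.1.2), fun h => z.2.2 (by rw [h]),
      decD_correct e hp0 z.1 z.2.1.1 z.2.1.2 z.2.2⟩, ?_⟩
    intro a b h
    obtain ⟨ha1, ha2⟩ := Prod.ext_iff.mp (Subtype.ext_iff.mp h)
    obtain ⟨hb1, hb2⟩ := Prod.ext_iff.mp ha2
    exact Prod.ext ha1 (Subtype.ext (Prod.ext hb1 hb2))
  obtain ⟨φ, hφinj⟩ := hφ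
  have hinj : Nat.card ((Fin 2 → Fin p) × T) ≤ Nat.card G :=
    Nat.card_le_card_of_injective φ hφinj
  have hfun : Nat.card (Fin 2 → Fin p) = p ^ 2 := by
    simp [Nat.card_eq_fintype_card]
  calc p * (p ^ 2 * (n * (n - 1))) = p ^ 2 * (p * (n * (n - 1))) := by ring
    _ ≤ p ^ 2 * ((p + 1) * Nat.card T) := Nat.mul_le_mul_left _ (count_bound' p n)
    _ = (p + 1) * (Nat.card (Fin 2 → Fin p) * Nat.card T) := by rw [hfun]; ring
    _ = (p + 1) * Nat.card ((Fin 2 → Fin p) × T) := by rw [Nat.card_prod]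
    _ ≤ (p + 1) * Nat.card G := Nat.mul_le_mul_left _ hinj
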